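/- The fixed point of the squared silver mean substitution is not eventually periodic: there is no p ≥ 1 and N such that the infinite word w satisfies w(n+p) = w(n) for all n ≥ N. -/
import Mathlib


/-- The silver mean substitution `B ↦ R`, `R ↦ RBR` (letters: `false = B`, `true = R`). -/
def silverSubst : Bool → List Bool
  | false => [true]
  | true => [true, false, true]

/-- The iterated substitution word `σⁿ(R)`. -/
def silverWord : ℕ → List Bool
  | 0 => [true]
  | n + 1 => (silverWord n).flatMap silverSubst

namespace SilverAux

/-- length of `σⁿ(R)` -/
def L (n : ℕ) : ℕ := (silverWord n).length

/-- number of `B`s (= `false`) in `σⁿ(R)` -/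
def B (n : ℕ) : ℕ := (silverWord n).count false

lemma flat_len (t : List Bool) :
    (t.flatMap silverSubst).length + 2 * t.count false = 3 * t.length := by
  induction t with
  | nil => simp
  | cons a t ih =>
    cases a <;> simp [silverSubst, List.count_cons] at * <;> omega

lemma flat_count (t : List Bool) :
    (t.flatMap silverSubst).count false + t.count false = t.length := by
  induction t with
  | nil => simp
  | cons a t ih =>
    cases a <;> simp [silverSubst, List.count_cons] at * <;> omega

lemma hLstep (n : ℕ) : L (n + 1) + 2 * B n = 3 * L n := flat_len (silverWord n)

lemma hBstep (n : ℕ) : B (n + 1) + B n = L n := flat_count (silverWord n)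

lemma hBlt (n : ℕ) : B n < L n := by
  induction n with
  | zero => simp [B, L, silverWord]
  | succ n ih =>
    have h1 := hLstep n
    have h2 := hBstep n
    omega

lemma hLge (n : ℕ) : n + 1 ≤ L n := by
  induction n with
  | zero => simp [L, silverWord]
  | succ n ih =>
    have h1 := hLstep n
    have h2 := hBlt n
    omega

lemma hB2 (n : ℕ) : B (n + 2) + B n = 2 * L n := by
  have h1 := hBstep n
  have h2 : B (n + 2) + B (n + 1) = L (n + 1) := hBstep (n + 1)
  have h3 := hLstep n
  omega

lemma hL2 (n : ℕ) : L (n + 2) = 2 * L (n + 1) + L n := by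
  have h1 := hBstep n
  have h2 : B (n + 2) + B (n + 1) = L (n + 1) := hBstep (n + 1)
  have h3 := hLstep n
  have h4 : L (n + 2) + 2 * B (n + 1) = 3 * L (n + 1) := hLstep (n + 1)
  omega

/-- the ±1 determinant -/
def D (n : ℕ) : ℤ := (B n : ℤ) * L (n + 1) - B (n + 1) * L n

lemma hBe (n : ℕ) : (B (n + 1) : ℤ) = L n - B n := by
  have := hBstep n; omega

lemma hLe (n : ℕ) : (L (n + 1) : ℤ) = 3 * L n - 2 * B n := by
  have := hLstep n; omega

lemma hB2e (n : ℕ) : (B (n + 2) : ℤ) = 2 * L n - B n := by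
  have := hB2 n; omega

lemma hL2e (n : ℕ) : (L (n + 2) : ℤ) = 7 * L n - 4 * B n := by
  have h1 := hL2 n
  have h2 := hLstep n
  have h3 : L (n + 2) + 2 * B (n + 1) = 3 * L (n + 1) := hLstep (n + 1)
  have h4 := hBstep n
  omega

lemma hD (n : ℕ) : D n = 1 ∨ D n = -1 := by
  induction n with
  | zero =>
    right
    have h0 : silverWord 0 = [true] := rfl
    have h1 : silverWord 1 = [true, false, true] := rfl
    simp [D, B, L, h0, h1]
  | succ n ih =>
    have key : D (n + 1) = -D n := by
      show (B (n + 1) : ℤ) * L (n + 2) - B (n + 2) * L (n + 1)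
          = -((B n : ℤ) * L (n + 1) - B (n + 1) * L n)
      rw [hB2e, hL2e, hBe, hLe]; ring
    rcases ih with h | h <;> rw [key, h] <;> simp

/-- Key recurrence lemma: a bounded integer solution of the Pell recurrence must
have two consecutive zeros. -/
lemma keyA : ∀ (C : ℕ) (d : ℕ → ℤ), (∀ n, d (n + 2) = 2 * d (n + 1) + d n) →
    (∀ n, |d n| ≤ (C : ℤ)) → ∃ n, d n = 0 ∧ d (n + 1) = 0 := by
  intro C
  induction C with
  | zero =>
    intro d _ hb
    have hz : ∀ n, d n = 0 := fun n =>
      abs_eq_zero.mp (le_antisymm (by simpa using hb n) (abs_nonneg _))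
    exact ⟨0, hz 0, hz 1⟩
  | succ C ih =>
    intro d hrec hb
    have habs : ∀ n, -((C : ℤ) + 1) ≤ d n ∧ d n ≤ (C : ℤ) + 1 := by
      intro n
      have := abs_le.mp (hb n)
      push_cast at this
      exact this
    by_cases h : ∃ k, |d (k + 1)| = ((C : ℤ) + 1)
    · exfalso
      obtain ⟨k, hk⟩ := h
      have hCnn : (0 : ℤ) ≤ (C : ℤ) := Int.natCast_nonneg C
      have e1 := hrec k
      have e2 := hrec (k + 1)
      have ha := habs k
      have hb1 := habs (k + 2)
      have hb2 := habs (k + 3)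
      rcases (abs_eq (by linarith : (0 : ℤ) ≤ (C : ℤ) + 1)).mp hk with h1 | h1 <;>
        linarith [ha.1, ha.2, hb1.1, hb1.2, hb2.1, hb2.2]
    · push_neg at h
      have hb' : ∀ n, |(fun n => d (n + 1)) n| ≤ (C : ℤ) := by
        intro n
        have h1 := hb (n + 1)
        have h2 := h n
        push_cast at h1
        have h3 : |d (n + 1)| < (C : ℤ) + 1 := lt_of_le_of_ne h1 h2
        simpa using by omega
      obtain ⟨n, hn1, hn2⟩ := ih (fun n => d (n + 1))
        (fun n => by simpa [Nat.add_right_comm] using hrec (n + 1)) hb'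
      exact ⟨n + 1, hn1, by simpa [Nat.add_right_comm] using hn2⟩

lemma sum_ind (t : List Bool) (g : ℕ → Bool)
    (h : ∀ i < t.length, g i = t.getD i false) :
    (∑ i ∈ Finset.range t.length, if g i = false then (1 : ℤ) else 0) = t.count false := by
  induction t generalizing g with
  | nil => simp
  | cons a t ih =>
    rw [List.length_cons, Finset.sum_range_succ']
    have h0 : g 0 = a := by simpa using h 0 (by simp)
    have ht := ih (fun i => g (i + 1)) (fun i hi => by simpa using h (i + 1) (by simpa using hi))
    rw [ht, List.count_cons]
    simp only [h0]
    cases a <;> push_cast <;> simp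

end SilverAux

open SilverAux in
/-- The infinite fixed point word of the silver mean substitution (the limit of the
`σⁿ(R)`, of which each `σⁿ(R)` is a prefix) is not eventually periodic. -/
theorem silver_fixed_point_not_eventually_periodic (w : ℕ → Bool)
    (hw : ∀ n i, i < (silverWord n).length → w i = (silverWord n).getD i false) :
    ¬ ∃ p : ℕ, 1 ≤ p ∧ ∃ N : ℕ, ∀ n ≥ N, w (n + p) = w n := by
  rintro ⟨p, hp, N, hper⟩
  -- counting function
  set F : ℕ → ℤ := fun m => ∑ i ∈ Finset.range m, if w i = false then (1 : ℤ) else 0 with hF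
  have hFs : ∀ m, F (m + 1) = F m + (if w m = false then (1 : ℤ) else 0) := by
    intro m; rw [hF]; exact Finset.sum_range_succ _ m
  set c : ℤ := F (N + p) - F N with hc
  have hGc : ∀ m, N ≤ m → F (m + p) - F m = c := by
    intro m hm
    induction m, hm using Nat.le_induction with
    | base => rw [hc]
    | succ m hm ih =>
      have : m + 1 + p = (m + p) + 1 := by omega
      rw [this, hFs, hFs, hper m hm]
      linarith
  have hFk : ∀ m, N ≤ m → ∀ k : ℕ, F (m + k * p) = F m + k * c := by
    intro m hm k
    induction k with
    | zero => simp
    | succ k ih =>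
      have h1 : m + (k + 1) * p = (m + k * p) + p := by ring
      have h2 := hGc (m + k * p) (by omega)
      rw [h1]
      push_cast
      linarith
  set C : ℕ := (Finset.range p).sup (fun r => ((p : ℤ) * F (N + r) - c * (N + r)).natAbs) with hC
  have hbound : ∀ m, N ≤ m → |(p : ℤ) * F m - c * m| ≤ (C : ℤ) := by
    intro m hm
    obtain ⟨q, r, hrp, hmeq⟩ : ∃ q r, r < p ∧ m = (N + r) + q * p :=
      ⟨(m - N) / p, (m - N) % p, Nat.mod_lt _ (by omega), by
        have h := Nat.div_add_mod (m - N) p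
        have h2 : (m - N) / p * p = p * ((m - N) / p) := Nat.mul_comm _ _
        omega⟩
    have hFm : F m = F (N + r) + q * c := by rw [hmeq]; exact hFk (N + r) (by omega) q
    have hmc : (m : ℤ) = (N + r : ℕ) + (q : ℤ) * p := by push_cast [hmeq]; ring
    have heq : (p : ℤ) * F m - c * m = (p : ℤ) * F (N + r) - c * (N + r) := by
      rw [hFm, hmc]; push_cast; ring
    rw [heq, Int.abs_eq_natAbs]
    have hle := Finset.le_sup (f := fun r => ((p : ℤ) * F (N + r) - c * (N + r)).natAbs)
      (Finset.mem_range.mpr hrp)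
    rw [← hC] at hle
    exact_mod_cast hle
  -- relate F to prefix counts
  have hFL : ∀ n, F (L n) = (B n : ℤ) := by
    intro n
    exact sum_ind (silverWord n) w (hw n)
  set d : ℕ → ℤ := fun n => (p : ℤ) * B n - c * L n with hd
  have hd_rec : ∀ n, d (n + 2) = 2 * d (n + 1) + d n := by
    intro n
    simp only [hd]
    rw [hB2e, hL2e, hBe, hLe]
    ring
  have hd_bound : ∀ n, |d (n + N)| ≤ (C : ℤ) := by
    intro n
    have hge : N ≤ L (n + N) := le_trans (by omega) (hLge (n + N))
    have := hbound (L (n + N)) hge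
    rw [hFL] at this
    simpa [hd] using this
  obtain ⟨m, h1, h2⟩ := keyA C (fun n => d (n + N))
    (fun n => by simpa [Nat.add_right_comm] using hd_rec (n + N)) hd_bound
  have h2' : d (m + N + 1) = 0 := by simpa [Nat.add_right_comm] using h2
  have key : (L (m + N + 1) : ℤ) * d (m + N) - (L (m + N) : ℤ) * d (m + N + 1)
      = (p : ℤ) * D (m + N) := by
    simp only [hd, D]; ring
  rw [h1, h2'] at key
  simp at key
  rcases key with hk | hk
  · have : (1 : ℤ) ≤ p := by exact_mod_cast hp
    omega
  · rcases hD (m + N) with h | h <;> omega
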